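/- Let (V,⟨·,·⟩,J) be a para/pseudo-Hermitian vector space of dimension 4 with Kähler form Ω. For ψ ∈ Λ²V*, define Ξ(ψ)(x,y,z,w) := 2ψ(x,y)⟨z,w⟩ + ψ(x,z)⟨y,w⟩ - ψ(y,z)⟨x,w⟩ - ψ(x,w)⟨y,z⟩ + ψ(y,w)⟨x,z⟩. If Ξ(ψ) belongs to the space of Kähler–Weyl tensors (i.e., satisfies the Kähler identity Ξ(ψ)(x,y,Jz,Jw) = ∓Ξ(ψ)(x,y,z,w) in addition to the Weyl symmetries), then ψ is orthogonal to Ω. -/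

import Mathlib

/-- `Ξ(ψ)(x,y,z,w) := 2ψ(x,y)⟨z,w⟩ + ψ(x,z)⟨y,w⟩ - ψ(y,z)⟨x,w⟩ - ψ(x,w)⟨y,z⟩ + ψ(y,w)⟨x,z⟩`. -/
def XiOf {V : Type*} [AddCommGroup V] [Module ℝ V]
    (B ψ : V →ₗ[ℝ] V →ₗ[ℝ] ℝ) (x y z w : V) : ℝ :=
  2 * ψ x y * B z w + ψ x z * B y w - ψ y z * B x w - ψ x w * B y z + ψ y w * B x z

/-- on a 4-dimensional para/pseudo-Hermitian vector space, if `Ξ(ψ)`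
satisfies the Kähler identity `Ξ(ψ)(x,y,Jz,Jw) = -ε Ξ(ψ)(x,y,z,w)`, then `ψ` is
orthogonal to the Kähler form `Ω(x,y) = ⟨x,Jy⟩` (with respect to the inner product
induced on `Λ²` via the inverse Gram matrix of a basis). -/
theorem statement17 {V : Type*} [AddCommGroup V] [Module ℝ V]
    (B : V →ₗ[ℝ] V →ₗ[ℝ] ℝ) (hBs : ∀ x y, B x y = B y x)
    (hBn : ∀ v, (∀ w, B v w = 0) → v = 0)
    (J : V →ₗ[ℝ] V) (ε : ℝ) (hε : ε = 1 ∨ ε = -1)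
    (hJ2 : ∀ x, J (J x) = ε • x)
    (hJB : ∀ x y, B (J x) (J y) = -ε * B x y)
    (b : Module.Basis (Fin 4) ℝ V) (Ginv : Matrix (Fin 4) (Fin 4) ℝ)
    (hGinv : ∀ i j, (∑ k, B (b i) (b k) * Ginv k j) = if i = j then (1 : ℝ) else 0)
    (ψ : V →ₗ[ℝ] V →ₗ[ℝ] ℝ) (hψ : ∀ x y, ψ x y = -ψ y x)
    (hK : ∀ x y z w, XiOf B ψ x y (J z) (J w) = -ε * XiOf B ψ x y z w) :
    (∑ i, ∑ j, ∑ k, ∑ l,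
        Ginv i k * Ginv j l * ψ (b i) (b j) * B (b k) (J (b l))) = 0 := by
  classical
  have hε2 : ε * ε = 1 := by rcases hε with h | h <;> simp [h]
  have hεne : ε ≠ 0 := by rcases hε with h | h <;> simp [h]
  -- symmetry of the inverse Gram matrix
  have hGsym : ∀ i j, Ginv i j = Ginv j i := by
    set G : Matrix (Fin 4) (Fin 4) ℝ := fun i j => B (b i) (b j) with hG
    have h1 : G * Ginv = 1 := by
      ext i j
      rw [Matrix.mul_apply, Matrix.one_apply]; exact hGinv i j
    have hGt : G.transpose = G := by
      ext i j; rw [Matrix.transpose_apply]; exact hBs (b j) (b i)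
    have h3 : Ginv.transpose * G = 1 := by
      have h := congrArg Matrix.transpose h1
      rwa [Matrix.transpose_mul, hGt, Matrix.transpose_one] at h
    have h4 : Ginv.transpose = Ginv := by
      calc Ginv.transpose = Ginv.transpose * (G * Ginv) := by rw [h1, Matrix.mul_one]
        _ = (Ginv.transpose * G) * Ginv := by rw [Matrix.mul_assoc]
        _ = Ginv := by rw [h3, Matrix.one_mul]
    intro i j
    have := congrFun (congrFun h4 j) i
    simpa [Matrix.transpose_apply] using this
  -- expansion of a functional against the basis
  have hreprf : ∀ (f : V →ₗ[ℝ] ℝ) (u : V), (∑ i, b.repr u i * f (b i)) = f u := by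
    intro f u
    conv_rhs => rw [← b.sum_repr u]
    rw [map_sum]
    exact Finset.sum_congr rfl fun i _ => by rw [map_smul, smul_eq_mul]
  have hBrep : ∀ (u : V) (l : Fin 4), B u (b l) = ∑ m, b.repr u m * B (b m) (b l) := by
    intro u l
    exact (hreprf (B.flip (b l)) u).symm
  -- coordinates via the inverse Gram matrix
  have hcoord : ∀ (u : V) (j : Fin 4), (∑ l, Ginv j l * B u (b l)) = b.repr u j := by
    intro u j
    have h1 : ∀ l : Fin 4, Ginv j l * B u (b l)
        = ∑ m, b.repr u m * (B (b m) (b l) * Ginv l j) := by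
      intro l
      rw [hBrep u l, Finset.mul_sum]
      exact Finset.sum_congr rfl fun m _ => by rw [hGsym j l]; ring
    rw [Finset.sum_congr rfl fun l _ => h1 l, Finset.sum_comm]
    have h2 : ∀ m : Fin 4, (∑ l, b.repr u m * (B (b m) (b l) * Ginv l j))
        = b.repr u m * (if m = j then (1:ℝ) else 0) := by
      intro m
      rw [← Finset.mul_sum, hGinv m j]
    rw [Finset.sum_congr rfl fun m _ => h2 m]
    simp [Finset.sum_ite_eq]
  -- reproducing property
  have hrep : ∀ (f : V →ₗ[ℝ] ℝ) (u : V),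
      (∑ j, ∑ l, Ginv j l * (B u (b l) * f (b j))) = f u := by
    intro f u
    have h1 : ∀ j : Fin 4, (∑ l, Ginv j l * (B u (b l) * f (b j)))
        = b.repr u j * f (b j) := by
      intro j
      rw [show (∑ l, Ginv j l * (B u (b l) * f (b j)))
          = (∑ l, Ginv j l * B u (b l)) * f (b j) from by
        rw [Finset.sum_mul]; exact Finset.sum_congr rfl fun l _ => by ring, hcoord]
    rw [Finset.sum_congr rfl fun j _ => h1 j]
    exact hreprf f u
  -- reproducing property, contraction on the other index
  have hrep' : ∀ (f : V →ₗ[ℝ] ℝ) (u : V),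
      (∑ j, ∑ l, Ginv j l * (B u (b j) * f (b l))) = f u := by
    intro f u
    rw [Finset.sum_comm]
    rw [show (∑ l, ∑ j, Ginv j l * (B u (b j) * f (b l)))
        = ∑ l, ∑ j, Ginv l j * (B u (b j) * f (b l)) from
      Finset.sum_congr rfl fun l _ => Finset.sum_congr rfl fun j _ => by rw [hGsym j l]]
    exact hrep f u
  -- pulling a constant out of the double contraction
  have pull : ∀ (c : ℝ) (g : Fin 4 → Fin 4 → ℝ),
      (∑ j, ∑ l, Ginv j l * (c * g j l)) = c * ∑ j, ∑ l, Ginv j l * g j l := by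
    intro c g
    rw [Finset.mul_sum]
    refine Finset.sum_congr rfl fun j _ => ?_
    rw [Finset.mul_sum]
    exact Finset.sum_congr rfl fun l _ => by ring
  -- trace of the identity is 4
  have hT4 : (∑ j, ∑ l, Ginv j l * B (b j) (b l)) = 4 := by
    have h1 : ∀ j : Fin 4, (∑ l, Ginv j l * B (b j) (b l)) = 1 := by
      intro j
      rw [hcoord (b j) j]
      simp
    rw [Finset.sum_congr rfl fun j _ => h1 j]
    norm_num
  -- contraction of ψ with the symmetric Ginv vanishes
  have hc0 : (∑ j, ∑ l, Ginv j l * ψ (b j) (b l)) = 0 := by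
    have h1 : (∑ j, ∑ l, Ginv j l * ψ (b j) (b l))
        = -(∑ j, ∑ l, Ginv j l * ψ (b j) (b l)) := by
      conv_lhs => rw [Finset.sum_comm]
      rw [show (∑ l, ∑ j, Ginv j l * ψ (b j) (b l))
          = ∑ l, ∑ j, -(Ginv l j * ψ (b l) (b j)) from
        Finset.sum_congr rfl fun l _ => Finset.sum_congr rfl fun j _ => by
          rw [hGsym j l, hψ (b j) (b l)]; ring]
      simp
    linarith
  -- J is skew-adjoint for B
  have hJskew : ∀ x y, B x (J y) = -B (J x) y := by
    intro x y
    have h := hJB x (J y)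
    rw [hJ2 y, map_smul, smul_eq_mul] at h
    have h' : ε * B (J x) y = ε * (-(B x (J y))) := by linarith
    have := mul_left_cancel₀ hεne h'
    linarith
  have hBJ : ∀ x z, B z (J x) = -B x (J z) := by
    intro x z
    rw [hJskew z x, hBs (J z) x]
  -- the Kähler identity with the common term removed
  have hF : ∀ x y z w,
      ψ x (J z) * B y (J w) - ψ y (J z) * B x (J w)
        - ψ x (J w) * B y (J z) + ψ y (J w) * B x (J z)
      = -ε * (ψ x z * B y w - ψ y z * B x w - ψ x w * B y z + ψ y w * B x z) := by
    intro x y z w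
    have h := hK x y z w
    unfold XiOf at h
    have h2 := hJB z w
    linear_combination h - 2 * ψ x y * h2
  -- the contracted Kähler identity
  have hstar : ∀ x z,
      (∑ j, ∑ l, Ginv j l * B (b j) (J (b l))) * ψ x (J z)
        + ψ (J x) (J z) + ε * ψ x z
      = -(∑ j, ∑ l, Ginv j l * ψ (b j) (J (b l))) * B x (J z) := by
    intro x z
    have hsum : (∑ j, ∑ l, Ginv j l *
          (ψ x (J z) * B (b j) (J (b l)) - ψ (b j) (J z) * B x (J (b l))
            - ψ x (J (b l)) * B (b j) (J z) + ψ (b j) (J (b l)) * B x (J z)))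
        = ∑ j, ∑ l, Ginv j l * (-ε *
          (ψ x z * B (b j) (b l) - ψ (b j) z * B x (b l)
            - ψ x (b l) * B (b j) z + ψ (b j) (b l) * B x z)) :=
      Finset.sum_congr rfl fun j _ => Finset.sum_congr rfl fun l _ => by
        rw [hF x (b j) z (b l)]
    -- expand the left side
    have E1 : (∑ j, ∑ l, Ginv j l * (ψ x (J z) * B (b j) (J (b l))))
        = ψ x (J z) * ∑ j, ∑ l, Ginv j l * B (b j) (J (b l)) :=
      pull _ _
    have E2 : (∑ j, ∑ l, Ginv j l * (ψ (b j) (J z) * B x (J (b l))))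
        = -(ψ (J x) (J z)) := by
      have h1 : ∀ (j l : Fin 4), Ginv j l * (ψ (b j) (J z) * B x (J (b l)))
          = -(Ginv j l * (B (J x) (b l) * (ψ.flip (J z)) (b j))) := by
        intro j l
        rw [hJskew x (b l), LinearMap.flip_apply]
        ring
      rw [Finset.sum_congr rfl fun j _ => Finset.sum_congr rfl fun l _ => h1 j l]
      rw [show (∑ j, ∑ l, -(Ginv j l * (B (J x) (b l) * (ψ.flip (J z)) (b j))))
          = -(∑ j, ∑ l, Ginv j l * (B (J x) (b l) * (ψ.flip (J z)) (b j))) from by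
        simp]
      rw [hrep (ψ.flip (J z)) (J x), LinearMap.flip_apply]
    have E3 : (∑ j, ∑ l, Ginv j l * (ψ x (J (b l)) * B (b j) (J z)))
        = ε * ψ x z := by
      have h1 : ∀ (j l : Fin 4), Ginv j l * (ψ x (J (b l)) * B (b j) (J z))
          = Ginv j l * (B (J z) (b j) * ((ψ x).comp J) (b l)) := by
        intro j l
        rw [hBs (b j) (J z), LinearMap.comp_apply]
        ring
      rw [Finset.sum_congr rfl fun j _ => Finset.sum_congr rfl fun l _ => h1 j l]
      rw [hrep' ((ψ x).comp J) (J z), LinearMap.comp_apply, hJ2 z, map_smul,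
        smul_eq_mul]
    have E4 : (∑ j, ∑ l, Ginv j l * (ψ (b j) (J (b l)) * B x (J z)))
        = (∑ j, ∑ l, Ginv j l * ψ (b j) (J (b l))) * B x (J z) := by
      rw [show (∑ j, ∑ l, Ginv j l * (ψ (b j) (J (b l)) * B x (J z)))
          = ∑ j, ∑ l, Ginv j l * (B x (J z) * ψ (b j) (J (b l))) from
        Finset.sum_congr rfl fun j _ => Finset.sum_congr rfl fun l _ => by ring]
      rw [pull (B x (J z)) (fun j l => ψ (b j) (J (b l)))]
      ring
    have R1 : (∑ j, ∑ l, Ginv j l * (ψ x z * B (b j) (b l))) = ψ x z * 4 := by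
      rw [pull (ψ x z) (fun j l => B (b j) (b l)), hT4]
    have R2 : (∑ j, ∑ l, Ginv j l * (ψ (b j) z * B x (b l))) = ψ x z := by
      have h1 : ∀ (j l : Fin 4), Ginv j l * (ψ (b j) z * B x (b l))
          = Ginv j l * (B x (b l) * (ψ.flip z) (b j)) := by
        intro j l; rw [LinearMap.flip_apply]; ring
      rw [Finset.sum_congr rfl fun j _ => Finset.sum_congr rfl fun l _ => h1 j l]
      rw [hrep (ψ.flip z) x, LinearMap.flip_apply]
    have R3 : (∑ j, ∑ l, Ginv j l * (ψ x (b l) * B (b j) z)) = ψ x z := by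
      have h1 : ∀ (j l : Fin 4), Ginv j l * (ψ x (b l) * B (b j) z)
          = Ginv j l * (B z (b j) * (ψ x) (b l)) := by
        intro j l; rw [hBs (b j) z]; ring
      rw [Finset.sum_congr rfl fun j _ => Finset.sum_congr rfl fun l _ => h1 j l]
      exact hrep' (ψ x) z
    have R4 : (∑ j, ∑ l, Ginv j l * (ψ (b j) (b l) * B x z)) = 0 := by
      rw [show (∑ j, ∑ l, Ginv j l * (ψ (b j) (b l) * B x z))
          = ∑ j, ∑ l, Ginv j l * (B x z * ψ (b j) (b l)) from
        Finset.sum_congr rfl fun j _ => Finset.sum_congr rfl fun l _ => by ring]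
      rw [pull (B x z) (fun j l => ψ (b j) (b l)), hc0, mul_zero]
    -- split both sides of hsum into the four pieces
    rw [show ∀ (a c d e : Fin 4 → Fin 4 → ℝ), (∑ j, ∑ l, Ginv j l *
          (a j l - c j l - d j l + e j l))
        = (∑ j, ∑ l, Ginv j l * a j l) - (∑ j, ∑ l, Ginv j l * c j l)
          - (∑ j, ∑ l, Ginv j l * d j l) + (∑ j, ∑ l, Ginv j l * e j l) from by
      intro a c d e
      simp [mul_sub, mul_add, Finset.sum_add_distrib, Finset.sum_sub_distrib]] at hsum
    rw [show (∑ j, ∑ l, Ginv j l * (-ε *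
          (ψ x z * B (b j) (b l) - ψ (b j) z * B x (b l)
            - ψ x (b l) * B (b j) z + ψ (b j) (b l) * B x z)))
        = -ε * ∑ j, ∑ l, Ginv j l *
          (ψ x z * B (b j) (b l) - ψ (b j) z * B x (b l)
            - ψ x (b l) * B (b j) z + ψ (b j) (b l) * B x z) from
      pull (-ε) _] at hsum
    rw [show ∀ (a c d e : Fin 4 → Fin 4 → ℝ), (∑ j, ∑ l, Ginv j l *
          (a j l - c j l - d j l + e j l))
        = (∑ j, ∑ l, Ginv j l * a j l) - (∑ j, ∑ l, Ginv j l * c j l)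
          - (∑ j, ∑ l, Ginv j l * d j l) + (∑ j, ∑ l, Ginv j l * e j l) from by
      intro a c d e
      simp [mul_sub, mul_add, Finset.sum_add_distrib, Finset.sum_sub_distrib]] at hsum
    rw [E1, E2, E3, E4, R1, R2, R3, R4] at hsum
    linear_combination hsum
  -- the key pointwise identity
  have hkey : ∀ x z,
      (∑ j, ∑ l, Ginv j l * ψ (b j) (J (b l))) * B x (J z) = 0 := by
    intro x z
    have h1 := hstar x z
    have h2 := hstar z x
    have h3 := hstar (J x) (J z)
    rw [hψ z (J x), hψ (J z) (J x), hψ z x, hBJ x z] at h2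
    rw [hJ2 x, hJ2 z] at h3
    simp only [map_smul, LinearMap.smul_apply, smul_eq_mul] at h3
    have e5 : B (J x) z = -B x (J z) := by linarith [hJskew x z]
    rw [e5] at h3
    rcases hε with hE | hE <;> subst hE
    · linear_combination (-(1/2) : ℝ) * h2 - (1/2 : ℝ) * h3
    · linear_combination ((1/2) : ℝ) * h3 - (1/2 : ℝ) * h2
  -- hence the contraction of ψ against Ω vanishes
  have hc1 : (∑ j, ∑ l, Ginv j l * ψ (b j) (J (b l))) = 0 := by
    by_contra hne
    have hB0 : ∀ x z, B x (J z) = 0 := by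
      intro x z
      rcases mul_eq_zero.mp (hkey x z) with h | h
      · exact absurd h hne
      · exact h
    have hJ0 : ∀ z, J z = 0 := by
      intro z
      refine hBn _ fun w => ?_
      rw [hBs (J z) w]
      exact hB0 w z
    have hb0 : b 0 = (0 : V) := by
      have h0 : (0 : V) = ε • b 0 := by
        rw [← hJ2 (b 0), hJ0 (b 0), map_zero]
      calc b 0 = ε⁻¹ • (ε • b 0) := by
            rw [smul_smul, inv_mul_cancel₀ hεne, one_smul]
        _ = ε⁻¹ • (0 : V) := by rw [← h0]
        _ = 0 := smul_zero _
    exact b.ne_zero 0 hb0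
  -- finally, rewrite the goal as minus that contraction
  have step1 : ∀ i j : Fin 4,
      (∑ k, ∑ l, Ginv i k * Ginv j l * ψ (b i) (b j) * B (b k) (J (b l)))
      = ∑ l, Ginv j l * ψ (b i) (b j) * b.repr (J (b l)) i := by
    intro i j
    rw [Finset.sum_comm]
    refine Finset.sum_congr rfl fun l _ => ?_
    have h1 : ∀ k : Fin 4, Ginv i k * Ginv j l * ψ (b i) (b j) * B (b k) (J (b l))
        = (Ginv j l * ψ (b i) (b j)) * (Ginv i k * B (J (b l)) (b k)) := by
      intro k; rw [hBs (b k) (J (b l))]; ring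
    rw [Finset.sum_congr rfl fun k _ => h1 k, ← Finset.mul_sum, hcoord (J (b l)) i]
  have step2 : ∀ j l : Fin 4,
      (∑ i, Ginv j l * ψ (b i) (b j) * b.repr (J (b l)) i)
      = -(Ginv j l * ψ (b j) (J (b l))) := by
    intro j l
    have h1 : ∀ i : Fin 4, Ginv j l * ψ (b i) (b j) * b.repr (J (b l)) i
        = Ginv j l * (b.repr (J (b l)) i * (ψ.flip (b j)) (b i)) := by
      intro i; rw [LinearMap.flip_apply]; ring
    rw [Finset.sum_congr rfl fun i _ => h1 i, ← Finset.mul_sum,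
      hreprf (ψ.flip (b j)) (J (b l)), LinearMap.flip_apply,
      hψ (J (b l)) (b j)]
    ring
  calc (∑ i, ∑ j, ∑ k, ∑ l,
        Ginv i k * Ginv j l * ψ (b i) (b j) * B (b k) (J (b l)))
      = ∑ i, ∑ j, ∑ l, Ginv j l * ψ (b i) (b j) * b.repr (J (b l)) i :=
        Finset.sum_congr rfl fun i _ => Finset.sum_congr rfl fun j _ => step1 i j
    _ = ∑ j, ∑ l, ∑ i, Ginv j l * ψ (b i) (b j) * b.repr (J (b l)) i := by
        rw [Finset.sum_comm]
        exact Finset.sum_congr rfl fun j _ => Finset.sum_comm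
    _ = ∑ j, ∑ l, -(Ginv j l * ψ (b j) (J (b l))) :=
        Finset.sum_congr rfl fun j _ => Finset.sum_congr rfl fun l _ => step2 j l
    _ = -(∑ j, ∑ l, Ginv j l * ψ (b j) (J (b l))) := by simp
    _ = 0 := by rw [hc1, neg_zero]
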